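/- Suppose a function $g: [1,\infty) \to \mathbb{R}$ satisfies: (i) $g(r)/r \to \gamma$ as $r \to \infty$, (ii) $g(r) \leq \gamma r$ for all $r$, and (iii) there exists $b > 0$ such that $g(2r) - b\, r^{1/2} \log^2 r \leq 2 g(r)$ for all $r \geq 1$. Then there exists a constant $c_0 > 0$ such that $g(r) \geq \gamma r - c_0 r^{1/2} \log^2 r$ for all $r \geq 2$. -/

import Mathlib

open Filter Real

set_option maxHeartbeats 1000000 in
/-- Howard–Newman iteration lemma. If `g(r)/r → γ`, `g(r) ≤ γ r`, and
`g(2r) - b √r log² r ≤ 2 g(r)` for `r ≥ 1`, then `g(r) ≥ γ r - c₀ √r log² r` for `r ≥ 2`. -/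
theorem howard_newman_iteration (g : ℝ → ℝ) (γ b : ℝ) (hb : 0 < b)
    (h1 : Tendsto (fun r => g r / r) atTop (nhds γ))
    (h2 : ∀ r ≥ (1 : ℝ), g r ≤ γ * r)
    (h3 : ∀ r ≥ (1 : ℝ), g (2 * r) - b * Real.sqrt r * (Real.log r) ^ 2 ≤ 2 * g r) :
    ∃ c₀ > (0 : ℝ), ∀ r ≥ (2 : ℝ),
      γ * r - c₀ * Real.sqrt r * (Real.log r) ^ 2 ≤ g r := by
  set x : ℝ := (Real.sqrt 2)⁻¹ with hxdef
  have hs2sq : Real.sqrt 2 * Real.sqrt 2 = 2 := Real.mul_self_sqrt (by norm_num)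
  have hs2 : (1:ℝ) < Real.sqrt 2 := by nlinarith [Real.sqrt_nonneg 2]
  have hs2pos : (0:ℝ) < Real.sqrt 2 := by linarith
  have hx0 : 0 < x := inv_pos.2 hs2pos
  have hx1 : x < 1 := by
    rw [hxdef]
    exact inv_lt_one_of_one_lt₀ hs2
  have hxs : x * Real.sqrt 2 = 1 := inv_mul_cancel₀ (ne_of_gt hs2pos)
  -- summability of the series
  have hsum : Summable (fun k : ℕ => ((k:ℝ)+1)^2 * x ^ k) := by
    have h0 : Summable (fun k : ℕ => (k:ℝ)^2 * x ^ k) :=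
      summable_pow_mul_geometric_of_norm_lt_one 2
        (by rw [Real.norm_eq_abs, abs_of_pos hx0]; exact hx1)
    have ha : Summable (fun k : ℕ => (k:ℝ)^1 * x ^ k) :=
      summable_pow_mul_geometric_of_norm_lt_one 1
        (by rw [Real.norm_eq_abs, abs_of_pos hx0]; exact hx1)
    have hgeo : Summable (fun k : ℕ => x ^ k) :=
      summable_geometric_of_lt_one (le_of_lt hx0) hx1
    have := (h0.add ((ha.mul_left 2).add hgeo))
    refine this.congr fun k => ?_
    ring
  set S : ℝ := ∑' k : ℕ, ((k:ℝ)+1)^2 * x ^ k with hSdef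
  have hS0 : 0 ≤ S := tsum_nonneg fun k => by positivity
  set h : ℝ → ℝ := fun r => γ * r - g r with hhdef
  clear_value x S h
  have key : ∀ r ≥ (1:ℝ), 2 * h r ≤ h (2*r) + b * Real.sqrt r * (Real.log r)^2 := by
    intro r hr
    have h3r := h3 r hr
    have h2r := h2 r hr
    simp only [hhdef]
    nlinarith
  -- multiplicative form of the iteration
  have iter : ∀ n : ℕ, ∀ r ≥ (2:ℝ),
      (2:ℝ)^n * (h r - b/2 * Real.sqrt r * (Real.log r)^2 *
        ∑ k ∈ Finset.range n, ((k:ℝ)+1)^2 * x^k) ≤ h (2^n * r) := by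
    intro n
    induction n with
    | zero => intro r hr; simp
    | succ n ih =>
      intro r hr
      have hr0 : (0:ℝ) < r := by linarith
      have hr1 : (1:ℝ) ≤ r := by linarith
      have h2npos : (0:ℝ) < 2^n := by positivity
      have hrn : (1:ℝ) ≤ 2^n * r := by nlinarith [one_le_pow₀ (by norm_num : (1:ℝ) ≤ 2) (n := n)]
      have step := key (2^n * r) hrn
      have heq : (2:ℝ) * (2^n * r) = 2^(n+1) * r := by ring
      rw [heq] at step
      -- bound the error term
      have hlogr : 0 ≤ Real.log r := Real.log_nonneg hr1
      have hlognn : 0 ≤ Real.log (2^n * r) := Real.log_nonneg hrn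
      have hlog : Real.log (2^n * r) ≤ ((n:ℝ)+1) * Real.log r := by
        rw [Real.log_mul (by positivity) (ne_of_gt hr0), Real.log_pow]
        have h2r : Real.log 2 ≤ Real.log r := Real.log_le_log (by norm_num) hr
        nlinarith [Nat.cast_nonneg (α := ℝ) n]
      have hlogsq : (Real.log (2^n * r))^2 ≤ (((n:ℝ)+1) * Real.log r)^2 := by
        apply pow_le_pow_left₀ hlognn hlog
      have hsqpow : ((Real.sqrt 2)^n)^2 = (2:ℝ)^n := by
        rw [← pow_mul, mul_comm, pow_mul, Real.sq_sqrt (by norm_num : (0:ℝ) ≤ 2)]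
      have hA : Real.sqrt (2^n * r) = Real.sqrt 2 ^ n * Real.sqrt r := by
        rw [Real.sqrt_mul (by positivity), ← hsqpow, Real.sqrt_sq (by positivity)]
      have h2x : (2:ℝ) * x = Real.sqrt 2 := by
        rw [hxdef]
        field_simp
        rw [Real.sq_sqrt (by norm_num : (0:ℝ) ≤ 2)]
      have h2nx : (2:ℝ)^n * x^n = Real.sqrt 2 ^ n := by
        rw [← mul_pow, h2x]
      -- error term bound:
      have herr : b * Real.sqrt (2^n * r) * (Real.log (2^n * r))^2 ≤
          (2:ℝ)^(n+1) * (b/2 * Real.sqrt r * (Real.log r)^2 * (((n:ℝ)+1)^2 * x^n)) := by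
        have hsrt : 0 ≤ Real.sqrt r := Real.sqrt_nonneg r
        have hs2n : 0 ≤ Real.sqrt 2 ^ n := by positivity
        rw [hA]
        have h1 : b * (Real.sqrt 2 ^ n * Real.sqrt r) * (Real.log (2^n * r))^2 ≤
            b * (Real.sqrt 2 ^ n * Real.sqrt r) * ((((n:ℝ)+1) * Real.log r)^2) := by
          apply mul_le_mul_of_nonneg_left hlogsq
          positivity
        calc b * (Real.sqrt 2 ^ n * Real.sqrt r) * (Real.log (2^n * r))^2
            ≤ b * (Real.sqrt 2 ^ n * Real.sqrt r) * ((((n:ℝ)+1) * Real.log r)^2) := h1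
          _ = (2:ℝ)^(n+1) * (b/2 * Real.sqrt r * (Real.log r)^2 * (((n:ℝ)+1)^2 * x^n)) := by
              rw [show ((2:ℝ))^(n+1) = 2 * 2^n by ring, mul_pow, ← h2nx]
              ring
      have ihr := ih r hr
      rw [Finset.sum_range_succ]
      calc (2:ℝ)^(n+1) * (h r - b/2 * Real.sqrt r * (Real.log r)^2 *
              ((∑ k ∈ Finset.range n, ((k:ℝ)+1)^2 * x^k) + ((n:ℝ)+1)^2 * x^n))
          = 2 * ((2:ℝ)^n * (h r - b/2 * Real.sqrt r * (Real.log r)^2 *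
              ∑ k ∈ Finset.range n, ((k:ℝ)+1)^2 * x^k))
            - (2:ℝ)^(n+1) * (b/2 * Real.sqrt r * (Real.log r)^2 * (((n:ℝ)+1)^2 * x^n)) := by
              ring
        _ ≤ 2 * h (2^n * r)
            - (2:ℝ)^(n+1) * (b/2 * Real.sqrt r * (Real.log r)^2 * (((n:ℝ)+1)^2 * x^n)) := by
              linarith [ihr]
        _ ≤ h (2^(n+1) * r) := by linarith [step, herr]
  -- now pass to the limit
  refine ⟨b/2 * S + 1, by nlinarith, fun r hr => ?_⟩
  have hr0 : (0:ℝ) < r := by linarith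
  have hC : (0:ℝ) ≤ b/2 * Real.sqrt r * (Real.log r)^2 := by positivity
  set C : ℝ := b/2 * Real.sqrt r * (Real.log r)^2 with hCdef
  -- h r - C * S ≤ h (2^n r) / 2^n for all n
  have hstep : ∀ n : ℕ, h r - C * S ≤ h (2^n * r) / 2^n := by
    intro n
    have h2npos : (0:ℝ) < 2^n := by positivity
    have hpart : ∑ k ∈ Finset.range n, ((k:ℝ)+1)^2 * x^k ≤ S := by
      rw [hSdef]
      exact Summable.sum_le_tsum _ (fun k _ => by positivity) hsum
    have h1' := iter n r hr
    rw [le_div_iff₀ h2npos]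
    calc (h r - C * S) * 2^n ≤ (h r - C * ∑ k ∈ Finset.range n, ((k:ℝ)+1)^2 * x^k) * 2^n := by
          apply mul_le_mul_of_nonneg_right _ (le_of_lt h2npos)
          nlinarith [mul_le_mul_of_nonneg_left hpart hC]
      _ ≤ h (2^n * r) := by rw [mul_comm]; exact h1'
  -- the limit of h (2^n r) / 2^n is 0
  have ht : Tendsto (fun n : ℕ => (2:ℝ)^n * r) atTop atTop :=
    (tendsto_pow_atTop_atTop_of_one_lt (by norm_num : (1:ℝ) < 2)).atTop_mul_const hr0
  have hg : Tendsto (fun n : ℕ => g ((2:ℝ)^n * r) / ((2:ℝ)^n * r)) atTop (nhds γ) := h1.comp ht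
  have hf : Tendsto (fun n : ℕ => h ((2:ℝ)^n * r) / (2:ℝ)^n) atTop (nhds 0) := by
    have heq : (fun n : ℕ => h ((2:ℝ)^n * r) / (2:ℝ)^n) =
        (fun n : ℕ => γ * r - r * (g ((2:ℝ)^n * r) / ((2:ℝ)^n * r))) := by
      funext n
      have h2npos : (0:ℝ) < 2^n := by positivity
      simp only [hhdef]
      field_simp
    rw [heq]
    have := (tendsto_const_nhds : Tendsto (fun _ : ℕ => γ * r) atTop (nhds (γ * r))).sub
      (hg.const_mul r)
    have hz : γ * r - r * γ = 0 := by ring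
    rw [hz] at this
    exact this
  have hfinal : h r - C * S ≤ 0 := ge_of_tendsto' hf hstep
  have : h r ≤ C * S := by linarith
  simp only [hhdef] at this
  have hnn : 0 ≤ Real.sqrt r * (Real.log r)^2 := by positivity
  nlinarith [this]
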